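/- Let K be a commutative ring, L a Lie algebra over K, and A, B Lie subalgebras of L with ⁅a, b⁆ = 0 for all a ∈ A and b ∈ B. Let I, J be index types and v : I ⊕ J → L a map with v (inl i) ∈ A for all i ∈ I and v (inr j) ∈ B for all j ∈ J. Define v₁ : I ⊕ J → L by v₁ (inl i) = v (inl i) and v₁ (inr j) = 0, and v₂ by v₂ (inl i) = 0 and v₂ (inr j) = v (inr j). Then for every f ∈ FreeLieAlgebra K (I ⊕ J): FreeLieAlgebra.lift K v f = FreeLieAlgebra.lift K v₁ f + FreeLieAlgebra.lift K v₂ f. -/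
import Mathlib

theorem freeLieAlgebra_lift_split_of_commuting_subalgebras
    (K : Type*) (L : Type*) [CommRing K] [LieRing L] [LieAlgebra K L]
    (A B : LieSubalgebra K L)
    (hAB : ∀ a ∈ A, ∀ b ∈ B, ⁅a, b⁆ = (0 : L))
    (I J : Type*) (v : I ⊕ J → L)
    (hvA : ∀ i : I, v (Sum.inl i) ∈ A) (hvB : ∀ j : J, v (Sum.inr j) ∈ B)
    (v₁ v₂ : I ⊕ J → L)
    (hv₁l : ∀ i : I, v₁ (Sum.inl i) = v (Sum.inl i))
    (hv₁r : ∀ j : J, v₁ (Sum.inr j) = 0)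
    (hv₂l : ∀ i : I, v₂ (Sum.inl i) = 0)
    (hv₂r : ∀ j : J, v₂ (Sum.inr j) = v (Sum.inr j))
    (f : FreeLieAlgebra K (I ⊕ J)) :
    FreeLieAlgebra.lift K v f =
      FreeLieAlgebra.lift K v₁ f + FreeLieAlgebra.lift K v₂ f := by
  -- v₁ factors through A
  set w₁ : I ⊕ J → A :=
    Sum.elim (fun i => ⟨v (Sum.inl i), hvA i⟩) (fun _ => 0) with hw₁
  set w₂ : I ⊕ J → B :=
    Sum.elim (fun _ => 0) (fun j => ⟨v (Sum.inr j), hvB j⟩) with hw₂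
  have e1 : A.incl.comp (FreeLieAlgebra.lift K w₁) = FreeLieAlgebra.lift K v₁ := by
    rw [← FreeLieAlgebra.lift_unique]
    funext x
    cases x <;>
      simp [hw₁, FreeLieAlgebra.lift_of_apply, hv₁l, hv₁r]
  have e2 : B.incl.comp (FreeLieAlgebra.lift K w₂) = FreeLieAlgebra.lift K v₂ := by
    rw [← FreeLieAlgebra.lift_unique]
    funext x
    cases x <;>
      simp [hw₂, FreeLieAlgebra.lift_of_apply, hv₂l, hv₂r]
  have memA : ∀ g : FreeLieAlgebra K (I ⊕ J), FreeLieAlgebra.lift K v₁ g ∈ A := by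
    intro g
    rw [← e1]
    exact (FreeLieAlgebra.lift K w₁ g).2
  have memB : ∀ g : FreeLieAlgebra K (I ⊕ J), FreeLieAlgebra.lift K v₂ g ∈ B := by
    intro g
    rw [← e2]
    exact (FreeLieAlgebra.lift K w₂ g).2
  set T : FreeLieAlgebra K (I ⊕ J) →ₗ⁅K⁆ L :=
    { toLinearMap := (FreeLieAlgebra.lift K v₁ : FreeLieAlgebra K (I ⊕ J) →ₗ⁅K⁆ L).toLinearMap
        + (FreeLieAlgebra.lift K v₂ : FreeLieAlgebra K (I ⊕ J) →ₗ⁅K⁆ L).toLinearMap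
      map_lie' := by
        intro x y
        show FreeLieAlgebra.lift K v₁ ⁅x, y⁆ + FreeLieAlgebra.lift K v₂ ⁅x, y⁆ =
          ⁅FreeLieAlgebra.lift K v₁ x + FreeLieAlgebra.lift K v₂ x,
           FreeLieAlgebra.lift K v₁ y + FreeLieAlgebra.lift K v₂ y⁆
        have h1 : ⁅FreeLieAlgebra.lift K v₁ x, FreeLieAlgebra.lift K v₂ y⁆ = 0 :=
          hAB _ (memA x) _ (memB y)
        have h2 : ⁅FreeLieAlgebra.lift K v₂ x, FreeLieAlgebra.lift K v₁ y⁆ = 0 := by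
          rw [← lie_skew, hAB _ (memA y) _ (memB x), neg_zero]
        rw [add_lie, lie_add, lie_add, h1, h2, LieHom.map_lie, LieHom.map_lie]
        abel } with hT
  have eT : T = FreeLieAlgebra.lift K v := by
    rw [← FreeLieAlgebra.lift_unique]
    funext x
    show FreeLieAlgebra.lift K v₁ (FreeLieAlgebra.of K x)
        + FreeLieAlgebra.lift K v₂ (FreeLieAlgebra.of K x) = v x
    cases x <;> simp [FreeLieAlgebra.lift_of_apply, hv₁l, hv₁r, hv₂l, hv₂r]
  calc FreeLieAlgebra.lift K v f = T f := by rw [eT]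
    _ = _ := rfl
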